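/- For positive definite matrices A, B, the function g(x) = trace(A^(2x)·B^(2(1-x))) is convex on ℝ. -/

import Mathlib

open Matrix MeasureTheory
open scoped ComplexOrder

/-- Apply a real function to a Hermitian matrix via the spectral decomposition. -/
noncomputable def matFun {n : ℕ} (A : Matrix (Fin n) (Fin n) ℂ) (hA : A.IsHermitian)
    (g : ℝ → ℝ) : Matrix (Fin n) (Fin n) ℂ :=
  (hA.eigenvectorUnitary : Matrix (Fin n) (Fin n) ℂ) *
    Matrix.diagonal (fun i => (g (hA.eigenvalues i) : ℂ)) *
    star (hA.eigenvectorUnitary : Matrix (Fin n) (Fin n) ℂ)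

/-- Real power of a Hermitian matrix via the spectral decomposition. -/
noncomputable def mpow {n : ℕ} (A : Matrix (Fin n) (Fin n) ℂ) (hA : A.IsHermitian)
    (p : ℝ) : Matrix (Fin n) (Fin n) ℂ :=
  matFun A hA (fun x => x ^ p)

/-- Hilbert-Schmidt (Frobenius) norm of a matrix. -/
noncomputable def frob {n : ℕ} (X : Matrix (Fin n) (Fin n) ℂ) : ℝ :=
  Real.sqrt (Matrix.trace (star X * X)).re

lemma convexOn_sum' {ι : Type*} (s : Finset ι) (f : ι → ℝ → ℝ)
    (h : ∀ i ∈ s, ConvexOn ℝ Set.univ (f i)) :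
    ConvexOn ℝ Set.univ (fun x => ∑ i ∈ s, f i x) := by
  classical
  induction s using Finset.induction with
  | empty => simpa using convexOn_const 0 convex_univ
  | insert a t hx ih =>
    simp only [Finset.sum_insert hx]
    exact (h a (Finset.mem_insert_self a t)).add
      (ih fun i hi => h i (Finset.mem_insert_of_mem hi))

lemma convexOn_exp_affine (a b : ℝ) :
    ConvexOn ℝ Set.univ (fun x : ℝ => Real.exp (a * x + b)) := by
  refine ⟨convex_univ, fun x _ y _ t s ht hs hts => ?_⟩
  have h := convexOn_exp.2 (Set.mem_univ (a * x + b)) (Set.mem_univ (a * y + b)) ht hs hts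
  simp only [smul_eq_mul] at h ⊢
  calc Real.exp (a * (t * x + s * y) + b)
      = Real.exp (t * (a * x + b) + s * (a * y + b)) := by
        congr 1; linear_combination (-b) * hts
    _ ≤ t * Real.exp (a * x + b) + s * Real.exp (a * y + b) := h

lemma trace_conj_diag {n : ℕ} (U V : Matrix (Fin n) (Fin n) ℂ) (d e : Fin n → ℝ) :
    (Matrix.trace (U * Matrix.diagonal (fun i => (d i : ℂ)) * star U *
      (V * Matrix.diagonal (fun j => (e j : ℂ)) * star V))).re =
    ∑ i, ∑ j, Complex.normSq ((star U * V) i j) * (d i * e j) := by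
  set M := star U * V with hM
  set D := Matrix.diagonal (fun i => (d i : ℂ)) with hD
  set E := Matrix.diagonal (fun j => (e j : ℂ)) with hE
  have e1 : U * D * star U * (V * E * star V) = U * (D * (star U * (V * (E * star V)))) := by
    simp only [mul_assoc]
  rw [e1, Matrix.trace_mul_comm]
  have e2 : D * (star U * (V * (E * star V))) * U = D * (M * (E * star M)) := by
    simp only [hM, StarMul.star_mul, star_star, mul_assoc]
  rw [e2]
  have e3 : Matrix.trace (D * (M * (E * star M))) =
      ∑ i, ∑ j, ((Complex.normSq (M i j) * (d i * e j) : ℝ) : ℂ) := by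
    have h4 : ∀ i, (D * (M * (E * star M))) i i =
        ∑ j, ((Complex.normSq (M i j) * (d i * e j) : ℝ) : ℂ) := by
      intro i
      rw [hD, Matrix.diagonal_mul, Matrix.mul_apply, Finset.mul_sum]
      refine Finset.sum_congr rfl fun j _ => ?_
      rw [hE, Matrix.diagonal_mul, Matrix.star_apply]
      have : (d i : ℂ) * (M i j * ((e j : ℂ) * star (M i j))) =
          (M i j * star (M i j)) * ((d i : ℂ) * (e j : ℂ)) := by ring
      rw [this, Complex.star_def, Complex.mul_conj]
      push_cast
      ring
    simp only [Matrix.trace, Matrix.diag]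
    exact Finset.sum_congr rfl fun i _ => h4 i
  rw [e3]
  norm_cast


theorem stmt13 {n : ℕ} (A B : Matrix (Fin n) (Fin n) ℂ)
    (hA : A.PosDef) (hB : B.PosDef) :
    ConvexOn ℝ Set.univ
      (fun x : ℝ =>
        (Matrix.trace (mpow A hA.1 (2 * x) * mpow B hB.1 (2 * (1 - x)))).re) := by
  set U := (hA.1.eigenvectorUnitary : Matrix (Fin n) (Fin n) ℂ) with hU
  set V := (hB.1.eigenvectorUnitary : Matrix (Fin n) (Fin n) ℂ) with hV
  set lam := hA.1.eigenvalues with hlam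
  set mu := hB.1.eigenvalues with hmu
  have hlp : ∀ i, 0 < lam i := fun i => hA.eigenvalues_pos i
  have hmp : ∀ j, 0 < mu j := fun j => hB.eigenvalues_pos j
  have key : (fun x : ℝ =>
      (Matrix.trace (mpow A hA.1 (2 * x) * mpow B hB.1 (2 * (1 - x)))).re) =
      fun x : ℝ => ∑ i, ∑ j, Complex.normSq ((star U * V) i j) *
        Real.exp ((2 * Real.log (lam i) - 2 * Real.log (mu j)) * x
          + 2 * Real.log (mu j)) := by
    funext x
    show (Matrix.trace (U * Matrix.diagonal (fun i => ((lam i ^ (2*x) : ℝ) : ℂ)) * star U *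
      (V * Matrix.diagonal (fun j => ((mu j ^ (2*(1-x)) : ℝ) : ℂ)) * star V))).re = _
    rw [trace_conj_diag U V (fun i => lam i ^ (2*x)) (fun j => mu j ^ (2*(1-x)))]
    refine Finset.sum_congr rfl fun i _ => Finset.sum_congr rfl fun j _ => ?_
    rw [Real.rpow_def_of_pos (hlp i), Real.rpow_def_of_pos (hmp j), ← Real.exp_add]
    congr 2
    ring
  rw [key]
  refine convexOn_sum' _ _ fun i _ => convexOn_sum' _ _ fun j _ => ?_
  simpa [smul_eq_mul] using
    (convexOn_exp_affine (2 * Real.log (lam i) - 2 * Real.log (mu j))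
      (2 * Real.log (mu j))).smul (Complex.normSq_nonneg ((star U * V) i j))
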